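/- Let g be a finite-dimensional simple Lie algebra over an algebraically closed field k of characteristic 0 and σ an involution of g with g = g₀ ⊕ g₁. Let h ∈ g₀ be such that g is the direct sum of the eigenspaces g(n) = {z ∈ g | [h,z] = n z}, n ∈ ℤ, of ad h. Assume that every nonzero eigenvalue occurring in g₀ is even (i.e. g₀ ∩ g(n) = 0 for all odd n), and that g₁ ∩ g(n) ≠ 0 for some odd n. Then g₁ ∩ g(n) = 0 for every even n; that is, all ad h-eigenvalues occurring in g₁ are odd. -/

import Mathlib

open Module

section Defs

variable (k : Type*) [Field k] (g : Type*) [LieRing g] [LieAlgebra k g]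

/-- The eigenspace of a Lie algebra automorphism `σ` with eigenvalue `ε`,
as a `k`-submodule of `g`.  For an involution `σ`, `autEigenspace k g σ 1` is the
fixed-point space `g₀` and `autEigenspace k g σ (-1)` is `g₁`. -/
def autEigenspace (σ : g ≃ₗ⁅k⁆ g) (ε : k) : Submodule k g where
  carrier := {x | σ x = ε • x}
  add_mem' {a b} ha hb := by
    have : σ (a + b) = σ a + σ b := map_add σ.toLieHom a b
    simp only [Set.mem_setOf_eq] at ha hb ⊢
    rw [this, ha, hb, smul_add]
  zero_mem' := by
    have : σ (0 : g) = 0 := map_zero σ.toLieHom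
    simp only [Set.mem_setOf_eq, this, smul_zero]
  smul_mem' t a ha := by
    have : σ (t • a) = t • σ a := map_smul σ.toLieHom t a
    simp only [Set.mem_setOf_eq] at ha ⊢
    rw [this, ha, smul_comm]

/-- The centraliser `z_g(x) = {z ∈ g | [z,x] = 0}` of an element `x` of a Lie algebra,
as a submodule. -/
def centralizerSubmodule (x : g) : Submodule k g where
  carrier := {z | ⁅z, x⁆ = 0}
  add_mem' {a b} ha hb := by
    simp only [Set.mem_setOf_eq] at ha hb ⊢
    rw [add_lie, ha, hb, add_zero]
  zero_mem' := zero_lie x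
  smul_mem' t a ha := by
    simp only [Set.mem_setOf_eq] at ha ⊢
    rw [smul_lie, ha, smul_zero]

end Defs
section Defs

variable (k : Type*) [Field k] (g : Type*) [LieRing g] [LieAlgebra k g]

/-- The eigenspace of `ad h` with eigenvalue `c`, as a submodule:
`{z ∈ g | [h, z] = c • z}`.  For a short grading, `g(i) = adEigenspace k g h (2 * i)`
for `i = -1, 0, 1`. -/
def adEigenspace (h : g) (c : k) : Submodule k g where
  carrier := {z | ⁅h, z⁆ = c • z}
  add_mem' {a b} ha hb := by
    simp only [Set.mem_setOf_eq] at ha hb ⊢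
    rw [lie_add, ha, hb, smul_add]
  zero_mem' := by simp
  smul_mem' t a ha := by
    simp only [Set.mem_setOf_eq] at ha ⊢
    rw [lie_smul, ha, smul_comm]

end Defs


section AuxLemmas

variable {k : Type*} [Field k] {g : Type*} [LieRing g] [LieAlgebra k g]

lemma mem_autEigenspace' {σ : g ≃ₗ⁅k⁆ g} {ε : k} {x : g} :
    x ∈ autEigenspace k g σ ε ↔ σ x = ε • x := Iff.rfl

lemma mem_adEigenspace' {h : g} {c : k} {z : g} :
    z ∈ adEigenspace k g h c ↔ ⁅h, z⁆ = c • z := Iff.rfl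

lemma lie_mem_autEigenspace' {σ : g ≃ₗ⁅k⁆ g} {ε δ : k} {x y : g}
    (hx : x ∈ autEigenspace k g σ ε) (hy : y ∈ autEigenspace k g σ δ) :
    ⁅x, y⁆ ∈ autEigenspace k g σ (ε * δ) := by
  rw [mem_autEigenspace'] at hx hy ⊢
  rw [LieEquiv.map_lie, hx, hy, smul_lie, lie_smul, smul_smul]

lemma lie_mem_adEigenspace' {h : g} {m n : ℤ} {x y : g}
    (hx : x ∈ adEigenspace k g h (m : k)) (hy : y ∈ adEigenspace k g h (n : k)) :
    ⁅x, y⁆ ∈ adEigenspace k g h ((m + n : ℤ) : k) := by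
  rw [mem_adEigenspace'] at hx hy ⊢
  rw [leibniz_lie, hx, hy, smul_lie, lie_smul, ← add_smul]
  norm_cast

end AuxLemmas

/-- Let `g` be a finite-dimensional simple Lie algebra over an
algebraically closed field `k` of characteristic 0 and `σ` an involution of `g` with
`g = g₀ ⊕ g₁`.  Let `h ∈ g₀` be such that `g` is the direct sum of the eigenspaces
`g(n) = {z | [h,z] = n z}`, `n ∈ ℤ`, of `ad h`.  If `g₀ ∩ g(n) = 0` for all odd `n`
while `g₁ ∩ g(n) ≠ 0` for some odd `n`, then `g₁ ∩ g(n) = 0` for every even `n`. -/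
theorem odd_part_forces_all_odd
    (k : Type*) [Field k] [IsAlgClosed k] [CharZero k]
    (g : Type*) [LieRing g] [LieAlgebra k g] [FiniteDimensional k g]
    [LieAlgebra.IsSimple k g]
    (σ : g ≃ₗ⁅k⁆ g) (hσ : ∀ x, σ (σ x) = x)
    (h : g) (hh₀ : h ∈ autEigenspace k g σ 1)
    (hgrad : DirectSum.IsInternal (fun n : ℤ => adEigenspace k g h (n : k)))
    (hevn : ∀ n : ℤ, Odd n → autEigenspace k g σ 1 ⊓ adEigenspace k g h (n : k) = ⊥)
    (hodd : ∃ n : ℤ, Odd n ∧ autEigenspace k g σ (-1) ⊓ adEigenspace k g h (n : k) ≠ ⊥) :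
    ∀ n : ℤ, Even n → autEigenspace k g σ (-1) ⊓ adEigenspace k g h (n : k) = ⊥ := by
  classical
  set G0 : Submodule k g := autEigenspace k g σ 1 with hG0def
  set G1 : Submodule k g := autEigenspace k g σ (-1) with hG1def
  set V : ℤ → Submodule k g := fun n => adEigenspace k g h (n : k) with hVdef
  have hσh : σ h = h := by
    have h1 : σ h = (1 : k) • h := hh₀
    simpa using h1
  -- specialized bracket lemmas
  have lie11 : ∀ {x y : g}, x ∈ G1 → y ∈ G1 → ⁅x, y⁆ ∈ G0 := by
    intro x y hx hy
    have := lie_mem_autEigenspace' (k := k) hx hy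
    rwa [show ((-1 : k) * (-1)) = 1 by ring] at this
  have lie01 : ∀ {x y : g}, x ∈ G0 → y ∈ G1 → ⁅x, y⁆ ∈ G1 := by
    intro x y hx hy
    have := lie_mem_autEigenspace' (k := k) hx hy
    rwa [show ((1 : k) * (-1)) = -1 by ring] at this
  have lieV : ∀ {m n : ℤ} {x y : g}, x ∈ V m → y ∈ V n → ⁅x, y⁆ ∈ V (m + n) :=
    fun hx hy => lie_mem_adEigenspace' hx hy
  -- σ preserves each V n
  have hσV : ∀ (n : ℤ) (z : g), z ∈ V n → σ z ∈ V n := by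
    intro n z hz
    have hz' : ⁅h, z⁆ = (n : k) • z := hz
    show ⁅h, σ z⁆ = (n : k) • σ z
    have e1 : σ ⁅h, z⁆ = ⁅σ h, σ z⁆ := LieEquiv.map_lie σ h z
    have e2 : σ ((n : k) • z) = (n : k) • σ z := map_smul σ.toLieHom _ _
    calc ⁅h, σ z⁆ = ⁅σ h, σ z⁆ := by rw [hσh]
      _ = σ ⁅h, z⁆ := e1.symm
      _ = σ ((n : k) • z) := by rw [hz']
      _ = (n : k) • σ z := e2
  -- decomposition of each V n into G0 and G1 parts
  have hdecomp : ∀ n : ℤ, V n ≤ (G0 ⊓ V n) ⊔ (G1 ⊓ V n) := by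
    intro n z hz
    have hσz : σ z ∈ V n := hσV n z hz
    have two_ne : (2 : k) ≠ 0 := two_ne_zero
    have hz0 : (2⁻¹ : k) • (z + σ z) ∈ G0 ⊓ V n := by
      refine Submodule.mem_inf.mpr ⟨?_, ?_⟩
      · show σ ((2⁻¹ : k) • (z + σ z)) = (1 : k) • ((2⁻¹ : k) • (z + σ z))
        have e1 : σ ((2⁻¹ : k) • (z + σ z)) = (2⁻¹ : k) • σ (z + σ z) :=
          map_smul σ.toLieHom _ _
        have e2 : σ (z + σ z) = σ z + σ (σ z) := map_add σ.toLieHom _ _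
        rw [e1, e2, hσ z, one_smul, add_comm (σ z) z]
      · exact Submodule.smul_mem _ _ (Submodule.add_mem _ hz hσz)
    have hz1 : (2⁻¹ : k) • (z - σ z) ∈ G1 ⊓ V n := by
      refine Submodule.mem_inf.mpr ⟨?_, ?_⟩
      · show σ ((2⁻¹ : k) • (z - σ z)) = (-1 : k) • ((2⁻¹ : k) • (z - σ z))
        have e1 : σ ((2⁻¹ : k) • (z - σ z)) = (2⁻¹ : k) • σ (z - σ z) :=
          map_smul σ.toLieHom _ _
        have e2 : σ (z - σ z) = σ z - σ (σ z) := map_sub σ.toLinearEquiv _ _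
        rw [e1, e2, hσ z, show σ z - z = -(z - σ z) by abel, smul_neg, neg_one_smul]
      · exact Submodule.smul_mem _ _ (Submodule.sub_mem _ hz hσz)
    have hzeq : z = (2⁻¹ : k) • (z + σ z) + (2⁻¹ : k) • (z - σ z) := by
      rw [← smul_add, show z + σ z + (z - σ z) = (2 : k) • z by rw [two_smul]; abel,
        smul_smul, inv_mul_cancel₀ two_ne, one_smul]
    rw [hzeq]
    exact Submodule.add_mem _ (Submodule.mem_sup_left hz0) (Submodule.mem_sup_right hz1)
  -- the key submodules
  set C : Submodule k g := ⨆ m : ℤ, (G1 ⊓ V (2 * m)) with hCdef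
  set CC : Submodule k g := Submodule.span k {w : g | ∃ x ∈ C, ∃ y ∈ C, w = ⁅x, y⁆} with hCCdef
  set J : Submodule k g := C ⊔ CC with hJdef
  set G0even : Submodule k g := ⨆ m : ℤ, (G0 ⊓ V (2 * m)) with hGEdef
  set Evensup : Submodule k g := ⨆ m : ℤ, V (2 * m) with hEdef
  have hCJ : C ≤ J := le_sup_left
  have hCCJ : CC ≤ J := le_sup_right
  have rmul_apply : ∀ y x : g, (-(LieAlgebra.ad k g y)) x = ⁅x, y⁆ := by
    intro y x
    rw [LinearMap.neg_apply, LieAlgebra.ad_apply]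
    exact lie_skew x y
  -- induction principles
  have C_ind : ∀ (R : Submodule k g) (f : g →ₗ[k] g),
      (∀ (m : ℤ) (x : g), x ∈ G1 ⊓ V (2 * m) → f x ∈ R) → ∀ x ∈ C, f x ∈ R := by
    intro R f hf x hx
    have hle : C ≤ Submodule.comap f R :=
      iSup_le fun m y hy => Submodule.mem_comap.mpr (hf m y hy)
    exact Submodule.mem_comap.mp (hle hx)
  have CC_ind : ∀ (R : Submodule k g) (f : g →ₗ[k] g),
      (∀ x ∈ C, ∀ y ∈ C, f ⁅x, y⁆ ∈ R) → ∀ w ∈ CC, f w ∈ R := by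
    intro R f hf w hw
    have hle : CC ≤ Submodule.comap f R := by
      rw [hCCdef]
      apply Submodule.span_le.mpr
      rintro w ⟨x, hx, y, hy, rfl⟩
      exact Submodule.mem_comap.mpr (hf x hx y hy)
    exact Submodule.mem_comap.mp (hle hw)
  have KL2 : ∀ x ∈ C, ∀ y ∈ C, ⁅x, y⁆ ∈ CC := by
    intro x hx y hy
    exact Submodule.subset_span ⟨x, hx, y, hy, rfl⟩
  -- [C, D] = 0
  have KL3 : ∀ (n : ℤ), Odd n → ∀ d ∈ G1 ⊓ V n, ∀ x ∈ C, ⁅x, d⁆ = 0 := by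
    intro n hn d hd
    have hle : C ≤ centralizerSubmodule k g d := by
      apply iSup_le
      intro m x hx
      have hx1 := (Submodule.mem_inf.mp hx).1
      have hx2 := (Submodule.mem_inf.mp hx).2
      have hd1 := (Submodule.mem_inf.mp hd).1
      have hd2 := (Submodule.mem_inf.mp hd).2
      have hb : ⁅x, d⁆ ∈ G0 ⊓ V (2 * m + n) :=
        Submodule.mem_inf.mpr ⟨lie11 hx1 hd1, lieV hx2 hd2⟩
      have hodd' : Odd (2 * m + n) := by
        obtain ⟨r, hr⟩ := hn; exact ⟨m + r, by omega⟩
      have hbot : G0 ⊓ V (2 * m + n) = ⊥ := hevn _ hodd'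
      rw [hbot] at hb
      exact (Submodule.mem_bot k).mp hb
    exact fun x hx => hle hx
  -- CC ⊆ G0even
  have hCC_le : CC ≤ G0even := by
    have step1 : ∀ (q : ℤ) (y : g), y ∈ G1 ⊓ V (2 * q) → ∀ x ∈ C, ⁅x, y⁆ ∈ G0even := by
      intro q y hy
      intro x hxC
      have key : ∀ (m : ℤ) (x : g), x ∈ G1 ⊓ V (2 * m) → (-(LieAlgebra.ad k g y)) x ∈ G0even := by
        intro m x hx
        rw [rmul_apply]
        have hb : ⁅x, y⁆ ∈ G0 ⊓ V (2 * m + 2 * q) :=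
        Submodule.mem_inf.mpr ⟨lie11 (Submodule.mem_inf.mp hx).1 (Submodule.mem_inf.mp hy).1,
          lieV (Submodule.mem_inf.mp hx).2 (Submodule.mem_inf.mp hy).2⟩
        rw [show (2 * m + 2 * q : ℤ) = 2 * (m + q) by ring] at hb
        exact le_iSup (fun m => G0 ⊓ V (2 * m)) (m + q) hb
      have := C_ind G0even (-(LieAlgebra.ad k g y)) key x hxC
      rwa [rmul_apply] at this
    rw [hCCdef]
    apply Submodule.span_le.mpr
    rintro w ⟨x, hx, y, hy, rfl⟩
    have key : ∀ (q : ℤ) (z : g), z ∈ G1 ⊓ V (2 * q) → (LieAlgebra.ad k g x) z ∈ G0even := by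
      intro q z hz
      rw [LieAlgebra.ad_apply]
      exact step1 q z hz x hx
    have := C_ind G0even (LieAlgebra.ad k g x) key y hy
    rwa [LieAlgebra.ad_apply] at this
  -- [graded piece of G0, C] ⊆ C
  have KL1 : ∀ (p : ℤ) (a : g), a ∈ G0 ⊓ V p → ∀ x ∈ C, ⁅a, x⁆ ∈ C := by
    intro p a ha
    rcases Int.even_or_odd p with hp | hp
    · obtain ⟨r, hr⟩ := hp
      refine C_ind C (LieAlgebra.ad k g a) ?_
      intro m x hx
      rw [LieAlgebra.ad_apply]
      have hb : ⁅a, x⁆ ∈ G1 ⊓ V (p + 2 * m) :=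
        Submodule.mem_inf.mpr ⟨lie01 (Submodule.mem_inf.mp ha).1 (Submodule.mem_inf.mp hx).1,
          lieV (Submodule.mem_inf.mp ha).2 (Submodule.mem_inf.mp hx).2⟩
      rw [show (p + 2 * m : ℤ) = 2 * (r + m) by omega] at hb
      exact le_iSup (fun m => G1 ⊓ V (2 * m)) (r + m) hb
    · have ha0 : a = 0 := by
        have hbot : G0 ⊓ V p = ⊥ := hevn p hp
        rw [hbot] at ha
        exact (Submodule.mem_bot k).mp ha
      intro x hx
      rw [ha0, zero_lie]
      exact C.zero_mem
  -- [G0even, C] ⊆ C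
  have KL1' : ∀ a ∈ G0even, ∀ x ∈ C, ⁅a, x⁆ ∈ C := by
    intro a ha x hx
    have hle : G0even ≤ Submodule.comap (-(LieAlgebra.ad k g x)) C := by
      apply iSup_le
      intro p b hb
      refine Submodule.mem_comap.mpr ?_
      rw [rmul_apply]
      exact KL1 (2 * p) b hb x hx
    have h2 := Submodule.mem_comap.mp (hle ha)
    rwa [rmul_apply] at h2
  -- ideal obligations
  have O1 : ∀ (p : ℤ) (a : g), a ∈ G0 ⊓ V p → ∀ c ∈ J, ⁅a, c⁆ ∈ J := by
    intro p a ha c hc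
    have hle : J ≤ Submodule.comap (LieAlgebra.ad k g a) J := by
      refine sup_le ?_ ?_
      · intro c hc
        refine Submodule.mem_comap.mpr ?_
        rw [LieAlgebra.ad_apply]
        exact hCJ (KL1 p a ha c hc)
      · intro w hw
        refine Submodule.mem_comap.mpr ?_
        refine CC_ind J (LieAlgebra.ad k g a) ?_ w hw
        intro x hx y hy
        rw [LieAlgebra.ad_apply, leibniz_lie]
        exact J.add_mem (hCCJ (KL2 _ (KL1 p a ha x hx) _ hy))
          (hCCJ (KL2 _ hx _ (KL1 p a ha y hy)))
    have := Submodule.mem_comap.mp (hle hc)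
    rwa [LieAlgebra.ad_apply] at this
  have O2even : ∀ (p : ℤ) (x : g), x ∈ G1 ⊓ V (2 * p) → ∀ c ∈ J, ⁅x, c⁆ ∈ J := by
    intro p x hx c hc
    have hxC : x ∈ C := le_iSup (fun m => G1 ⊓ V (2 * m)) p hx
    have hle : J ≤ Submodule.comap (LieAlgebra.ad k g x) J := by
      refine sup_le ?_ ?_
      · intro c hc
        refine Submodule.mem_comap.mpr ?_
        rw [LieAlgebra.ad_apply]
        exact hCCJ (KL2 _ hxC _ hc)
      · intro w hw
        refine Submodule.mem_comap.mpr ?_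
        rw [LieAlgebra.ad_apply]
        have hwE : w ∈ G0even := hCC_le hw
        rw [← lie_skew]
        exact J.neg_mem (hCJ (KL1' w hwE x hxC))
    have := Submodule.mem_comap.mp (hle hc)
    rwa [LieAlgebra.ad_apply] at this
  have O2odd : ∀ (n : ℤ), Odd n → ∀ (x : g), x ∈ G1 ⊓ V n → ∀ c ∈ J, ⁅x, c⁆ ∈ J := by
    intro n hn x hx c hc
    have hzero : ∀ c ∈ C, ⁅x, c⁆ = 0 := by
      intro c hc
      rw [← lie_skew, KL3 n hn x hx c hc, neg_zero]
    have hle : J ≤ Submodule.comap (LieAlgebra.ad k g x) J := by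
      refine sup_le ?_ ?_
      · intro c hc
        refine Submodule.mem_comap.mpr ?_
        rw [LieAlgebra.ad_apply, hzero c hc]
        exact J.zero_mem
      · intro w hw
        refine Submodule.mem_comap.mpr ?_
        refine CC_ind J (LieAlgebra.ad k g x) ?_ w hw
        intro y hy z hz
        rw [LieAlgebra.ad_apply, leibniz_lie, hzero y hy, hzero z hz, zero_lie, lie_zero,
          add_zero]
        exact J.zero_mem
    have := Submodule.mem_comap.mp (hle hc)
    rwa [LieAlgebra.ad_apply] at this
  -- J is an ideal
  have main : ∀ c ∈ J, ∀ x : g, ⁅c, x⁆ ∈ J := by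
    intro c hc x
    have htop : (⨆ n : ℤ, V n) = ⊤ := hgrad.submodule_iSup_eq_top
    have hx : x ∈ (⨆ n : ℤ, V n) := htop.symm ▸ Submodule.mem_top
    have hle : (⨆ n : ℤ, V n) ≤ Submodule.comap (LieAlgebra.ad k g c) J := by
      apply iSup_le
      intro n
      refine le_trans (hdecomp n) (sup_le ?_ ?_)
      · intro a ha
        refine Submodule.mem_comap.mpr ?_
        rw [LieAlgebra.ad_apply, ← lie_skew]
        exact J.neg_mem (O1 n a ha c hc)
      · intro y hy
        refine Submodule.mem_comap.mpr ?_
        rw [LieAlgebra.ad_apply, ← lie_skew]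
        rcases Int.even_or_odd n with he | ho
        · obtain ⟨p, hp⟩ := he
          rw [show n = 2 * p by omega] at hy
          exact J.neg_mem (O2even p y hy c hc)
        · exact J.neg_mem (O2odd n ho y hy c hc)
    have := Submodule.mem_comap.mp (hle hx)
    rwa [LieAlgebra.ad_apply] at this
  let I : LieIdeal k g :=
    { J with
      lie_mem := fun {x m} hm => by
        rw [← lie_skew]
        exact J.neg_mem (main m hm x) }
  have hIJ : ∀ z : g, z ∈ I ↔ z ∈ J := fun z => Iff.rfl
  rcases LieAlgebra.IsSimple.eq_bot_or_eq_top I with hbot | htop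
  · -- J = ⊥, conclude
    have hJbot : ∀ z ∈ J, z = 0 := by
      intro z hz
      have : z ∈ I := (hIJ z).mpr hz
      rw [hbot] at this
      simpa using this
    intro n hn
    obtain ⟨p, hp⟩ := hn
    rw [eq_bot_iff]
    intro z hz
    have hzC : z ∈ C := by
      have : G1 ⊓ V n ≤ C := by
        rw [show n = 2 * p by omega]
        exact le_iSup (fun m => G1 ⊓ V (2 * m)) p
      exact this hz
    exact (Submodule.mem_bot k).mpr (hJbot z (hCJ hzC))
  · -- J = ⊤ contradicts existence of odd part
    exfalso
    obtain ⟨n, hn, hne⟩ := hodd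
    obtain ⟨d, hd, hd0⟩ := (Submodule.ne_bot_iff _).mp hne
    have hdJ : d ∈ J := by
      have : d ∈ I := by rw [htop]; trivial
      exact (hIJ d).mp this
    have hJE : J ≤ Evensup := by
      refine sup_le ?_ (le_trans hCC_le ?_)
      · exact iSup_le fun m => le_trans inf_le_right (le_iSup (fun m => V (2 * m)) m)
      · exact iSup_le fun m => le_trans inf_le_right (le_iSup (fun m => V (2 * m)) m)
    have hdis : Disjoint (V n) (⨆ (j : ℤ) (_ : j ≠ n), V j) := hgrad.submodule_iSupIndep n
    have hEle : Evensup ≤ ⨆ (j : ℤ) (_ : j ≠ n), V j := by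
      apply iSup_le
      intro m
      have hne2 : (2 * m : ℤ) ≠ n := by
        obtain ⟨r, hr⟩ := hn; omega
      exact le_iSup₂ (f := fun (j : ℤ) (_ : j ≠ n) => V j) (2 * m) hne2
    have hd2 : d ∈ V n := (Submodule.mem_inf.mp hd).2
    have : d = 0 :=
      (Submodule.disjoint_def.mp hdis) d hd2 (hEle (hJE hdJ))
    exact hd0 this
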